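/- arXiv:2001.09594 — 7 statements merged into one kernel-verified Lean document; each statement's English description precedes it below -/
import Mathlib

section
/- The coded homogeneous distortion D_Coded(K) = (σ_θ²/K)(γ_ch/((1+γ_ch)γ_ob) + (K+γ_ch)/(1+γ_ch)²) is strictly decreasing in K and converges to σ_θ²/(1+γ_ch)² as K → ∞. -/
open Filter

/-- D_Coded is strictly decreasing in K and converges to σθ²/(1+γch)². -/
theorem coded_distortion_decreasing_and_limit
    (σθ2 γob γch : ℝ) (hσ : 0 < σθ2) (hob : 0 < γob) (hch : 0 < γch)
    (D : ℕ → ℝ)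
    (hD : ∀ K, D K = σθ2 / K * (γch / ((1 + γch) * γob) + ((K : ℝ) + γch) / (1 + γch)^2)) :
    (∀ K₁ K₂ : ℕ, 1 ≤ K₁ → K₁ < K₂ → D K₂ < D K₁)
    ∧ Tendsto D atTop (nhds (σθ2 / (1 + γch)^2)) := by
  have h1 : (0:ℝ) < 1 + γch := by linarith
  set A : ℝ := σθ2 / (1 + γch)^2 with hA
  set B : ℝ := σθ2 * (γch / ((1 + γch) * γob) + γch / (1 + γch)^2) with hB
  have hBpos : 0 < B := by
    apply mul_pos hσ
    have : 0 < γch / ((1 + γch) * γob) := div_pos hch (mul_pos h1 hob)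
    have : 0 < γch / (1 + γch)^2 := div_pos hch (pow_pos h1 2)
    positivity
  have hD' : ∀ K : ℕ, 1 ≤ K → D K = A + B / K := by
    intro K hK
    have hKpos : (0:ℝ) < K := by exact_mod_cast hK
    rw [hD, hA, hB]
    field_simp
    ring
  constructor
  · intro K₁ K₂ h1' h2
    have hK2 : 1 ≤ K₂ := le_of_lt (lt_of_le_of_lt h1' h2)
    rw [hD' K₁ h1', hD' K₂ hK2]
    have hK1pos : (0:ℝ) < K₁ := by exact_mod_cast h1'
    have : B / K₂ < B / K₁ := by
      apply div_lt_div_of_pos_left hBpos hK1pos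
      exact_mod_cast h2
    linarith
  · have heq : D =ᶠ[atTop] fun K : ℕ => A + B / K := by
      filter_upwards [eventually_ge_atTop 1] with K hK using hD' K hK
    rw [Filter.tendsto_congr' heq]
    have := tendsto_const_div_atTop_nhds_zero_nat B
    have := (tendsto_const_nhds : Tendsto (fun _ : ℕ => A) atTop (nhds A)).add
      (tendsto_const_div_atTop_nhds_zero_nat B)
    simpa using this
end

section
/- For K = 1 or K = 2, D_Coded < D_Uncoded for all positive γ_ob and γ_ch; that is, the coded scheme strictly outperforms the uncoded scheme. -/
/-- For K = 1 or K = 2, the coded scheme strictly outperforms the uncoded one. -/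
theorem coded_beats_uncoded_small_K
    (K : ℕ) (hK : K = 1 ∨ K = 2) (σθ2 γob γch : ℝ)
    (hσ : 0 < σθ2) (hob : 0 < γob) (hch : 0 < γch) :
    σθ2 / K * (γch / ((1 + γch) * γob) + ((K : ℝ) + γch) / (1 + γch)^2)
      < σθ2 / K * (1 / γob + 1 / γch + 1 / (γob * γch)) := by
  have h1 : (0:ℝ) < 1 + γch := by linarith
  have hK2 : (0:ℝ) < (K:ℝ) := by rcases hK with h | h <;> simp [h]
  have hσK : 0 < σθ2 / K := by positivity
  apply mul_lt_mul_of_pos_left _ hσK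
  rcases hK with h | h <;> subst h <;> push_cast <;>
    rw [div_add_div _ _ (by positivity) (by positivity),
        div_lt_iff₀ (by positivity)] <;>
    rw [div_add_div _ _ (by positivity) (by positivity),
        div_add_div _ _ (by positivity) (by positivity),
        div_mul_eq_mul_div, lt_div_iff₀ (by positivity)]
  · nlinarith [mul_pos (mul_pos (mul_pos (mul_pos (mul_pos hob hob) hch) h1) h1)
      (show (0:ℝ) < 1+3*γch+2*γch^2+γob+γob*γch by positivity)]
  · nlinarith [mul_pos (mul_pos (mul_pos (mul_pos (mul_pos hob hob) hch) h1) h1)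
      (show (0:ℝ) < 1+3*γch+2*γch^2+γob by positivity)]
end

section
/- For K ≥ 3, D_Coded < D_Uncoded if and only if (K−2)γ_ch − 1 − (1/γ_ob)(γ_ch+1)(2γ_ch+1) < 0; in particular if γ_ch < 1/(K−2) the coded scheme outperforms the uncoded scheme for all γ_ob > 0. -/
/-- For K ≥ 3, coded beats uncoded iff (K−2)γch − 1 − (1/γob)(γch+1)(2γch+1) < 0;
in particular γch < 1/(K−2) suffices for all γob > 0. -/
theorem coded_beats_uncoded_iff_large_K
    (K : ℕ) (hK : 3 ≤ K) (σθ2 γob γch : ℝ)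
    (hσ : 0 < σθ2) (hob : 0 < γob) (hch : 0 < γch) :
    (σθ2 / K * (γch / ((1 + γch) * γob) + ((K : ℝ) + γch) / (1 + γch)^2)
        < σθ2 / K * (1 / γob + 1 / γch + 1 / (γob * γch))
      ↔ ((K : ℝ) - 2) * γch - 1 - (1 / γob) * (γch + 1) * (2 * γch + 1) < 0)
    ∧ (γch < 1 / ((K : ℝ) - 2) →
        σθ2 / K * (γch / ((1 + γch) * γob) + ((K : ℝ) + γch) / (1 + γch)^2)
          < σθ2 / K * (1 / γob + 1 / γch + 1 / (γob * γch))) := by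
  have hK2 : (2:ℝ) < (K:ℝ) := by exact_mod_cast lt_of_lt_of_le (by norm_num) hK
  have hKpos : (0:ℝ) < (K:ℝ) := by linarith
  have h1 : (0:ℝ) < 1 + γch := by linarith
  have hc : 0 < σθ2 / K := div_pos hσ hKpos
  set D : ℝ := γob * (1 + 2*γch - K*γch) + (1+γch)*(2*γch+1) with hD
  have hmain : (σθ2 / K * (γch / ((1 + γch) * γob) + ((K : ℝ) + γch) / (1 + γch)^2)
        < σθ2 / K * (1 / γob + 1 / γch + 1 / (γob * γch))) ↔ 0 < D := by
    rw [mul_lt_mul_iff_right₀ hc, ← sub_pos]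
    have heq : (1 / γob + 1 / γch + 1 / (γob * γch))
        - (γch / ((1 + γch) * γob) + ((K : ℝ) + γch) / (1 + γch)^2)
        = D / (γob * γch * (1+γch)^2) := by
      field_simp
      ring
    rw [heq]
    have hd : 0 < γob * γch * (1+γch)^2 := by positivity
    constructor
    · intro h
      have h2 := mul_pos h hd
      rwa [div_mul_cancel₀ _ (ne_of_gt hd)] at h2
    · intro h
      exact div_pos h hd
  have hcond : (((K : ℝ) - 2) * γch - 1 - (1 / γob) * (γch + 1) * (2 * γch + 1) < 0)
      ↔ 0 < D := by
    have heq : ((K : ℝ) - 2) * γch - 1 - (1 / γob) * (γch + 1) * (2 * γch + 1)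
        = -D / γob := by
      field_simp
      ring
    rw [heq, neg_div, neg_neg_iff_pos]
    constructor
    · intro h
      have h2 := mul_pos h hob
      rwa [div_mul_cancel₀ _ (ne_of_gt hob)] at h2
    · intro h
      exact div_pos h hob
  constructor
  · exact hmain.trans hcond.symm
  · intro hlt
    rw [hmain]
    have : γch * ((K:ℝ) - 2) < 1 := by
      have := (lt_div_iff₀ (by linarith : (0:ℝ) < (K:ℝ)-2)).mp hlt
      linarith
    have h2 : 0 < γob * (1 + 2*γch - K*γch) := by
      apply mul_pos hob
      nlinarith
    nlinarith
end

section
/- For K ≥ 3, the function f(γ_ch) = (γ_ch+1)(2γ_ch+1)/((K−2)γ_ch − 1), defined for γ_ch > 1/(K−2), attains its minimum value γ*_ob = (3K−2+2√(2(K²−K)))/(K−2)² at γ_ch = (√((K²−K)/2)+1)/(K−2). -/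
/-- The function f(γ) = (γ+1)(2γ+1)/((K−2)γ−1) on γ > 1/(K−2) attains its minimum
γ*_ob at γ = (√((K²−K)/2)+1)/(K−2). -/
theorem min_of_f
    (K : ℕ) (hK : 3 ≤ K) :
    let f : ℝ → ℝ := fun γ => (γ + 1) * (2 * γ + 1) / (((K : ℝ) - 2) * γ - 1)
    let γstar : ℝ := (3 * (K : ℝ) - 2 + 2 * Real.sqrt (2 * ((K : ℝ)^2 - K))) / ((K : ℝ) - 2)^2
    let γm : ℝ := (Real.sqrt (((K : ℝ)^2 - K) / 2) + 1) / ((K : ℝ) - 2)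
    (1 / ((K : ℝ) - 2) < γm)
    ∧ f γm = γstar
    ∧ (∀ γ : ℝ, 1 / ((K : ℝ) - 2) < γ → γstar ≤ f γ) := by
  intro f γstar γm
  have hK3 : (3:ℝ) ≤ (K:ℝ) := by exact_mod_cast hK
  have hcpos : (0:ℝ) < (K:ℝ) - 2 := by linarith
  have harg : (0:ℝ) < ((K:ℝ)^2 - K)/2 := by nlinarith
  set s : ℝ := Real.sqrt (((K : ℝ)^2 - K)/2) with hsdef
  have hs2 : s^2 = ((K:ℝ)^2 - K)/2 := Real.sq_sqrt harg.le
  have hspos : 0 < s := Real.sqrt_pos.mpr harg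
  have hsqrt2 : Real.sqrt (2 * ((K:ℝ)^2 - K)) = 2 * s := by
    rw [show 2 * ((K:ℝ)^2 - K) = (2*s)^2 by nlinarith, Real.sqrt_sq (by positivity)]
  have hγstar : γstar = (3*(K:ℝ) - 2 + 4*s)/((K:ℝ) - 2)^2 := by
    simp only [γstar, hsqrt2]; ring
  have hγm : γm = (s + 1)/((K:ℝ) - 2) := rfl
  have h1 : 1 / ((K:ℝ) - 2) < γm := by
    rw [hγm]
    exact (div_lt_div_iff_of_pos_right hcpos).mpr (by linarith)
  refine ⟨h1, ?_, ?_⟩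
  · have hden : ((K:ℝ) - 2) * γm - 1 = s := by
      rw [hγm]; field_simp; ring
    simp only [f]; rw [hden, hγstar, hγm]
    rw [div_eq_div_iff hspos.ne' (by positivity)]
    field_simp
    nlinarith [hs2, hspos, hcpos]
  · intro γ hγ
    have hdpos : 0 < ((K:ℝ) - 2) * γ - 1 := by
      rw [div_lt_iff₀ hcpos] at hγ; linarith
    simp only [f]
    rw [hγstar, div_le_div_iff₀ (by positivity) hdpos]
    nlinarith [sq_nonneg (((K:ℝ) - 2) * γ - s - 1), hs2, hspos, hcpos]
end

section
/- For K ≥ 3 and γ_ob < γ*_ob = (3K−2+2√(2(K²−K)))/(K−2)², the coded scheme outperforms the uncoded scheme for all γ_ch > 0, i.e., γ_ob < (γ_ch+1)(2γ_ch+1)/max((K−2)γ_ch−1, 0⁺) holds for every γ_ch > 0. -/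
set_option maxHeartbeats 1000000



lemma coded_uncoded_diff_eq (a c k : ℝ) (ha : a ≠ 0) (hc : c ≠ 0) (h1c : (1 + c) ≠ 0) :
    1 / a + 1 / c + 1 / (a * c) - (c / ((1 + c) * a) + (k + c) / (1 + c) ^ 2)
      = (2 * c ^ 2 + (3 - a * (k - 2)) * c + (1 + a)) / (a * c * (1 + c) ^ 2) := by
  field_simp
  ring

/-- For K ≥ 3 and γob < γ*_ob, the coded scheme outperforms the uncoded scheme
for every channel SNR γch > 0. -/
theorem coded_beats_uncoded_low_observation_SNR
    (K : ℕ) (hK : 3 ≤ K) (σθ2 γob : ℝ)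
    (hσ : 0 < σθ2) (hob : 0 < γob)
    (hsmall : γob < (3 * (K : ℝ) - 2 + 2 * Real.sqrt (2 * ((K : ℝ)^2 - K))) / ((K : ℝ) - 2)^2) :
    ∀ γch : ℝ, 0 < γch →
      σθ2 / K * (γch / ((1 + γch) * γob) + ((K : ℝ) + γch) / (1 + γch)^2)
        < σθ2 / K * (1 / γob + 1 / γch + 1 / (γob * γch)) := by
  intro c hc
  have hk3 : (3 : ℝ) ≤ (K : ℝ) := by exact_mod_cast hK
  have hk0 : (0 : ℝ) < (K : ℝ) := by linarith
  have hfac : 0 < σθ2 / K := div_pos hσ hk0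
  set k : ℝ := (K : ℝ) with hkdef
  set s : ℝ := Real.sqrt (2 * (k ^ 2 - k)) with hsdef
  have hs0 : 0 ≤ s := Real.sqrt_nonneg _
  have hs2 : s ^ 2 = 2 * (k ^ 2 - k) := Real.sq_sqrt (by nlinarith)
  have hsge : 2 ≤ s := by nlinarith
  have hk2 : 0 < (k - 2) ^ 2 := by nlinarith
  have ht : (k - 2) ^ 2 * γob < 3 * k - 2 + 2 * s := by
    have := (lt_div_iff₀ hk2).mp hsmall
    linarith
  -- key quadratic positivity
  have key : 0 < 2 * c ^ 2 + (3 - γob * (k - 2)) * c + (1 + γob) := by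
    by_cases hcase : γob * (k - 2) ≤ 3
    · nlinarith [sq_nonneg c]
    · push_neg at hcase
      have h1 : -(2 * s) < (k - 2) ^ 2 * γob - (3 * k - 2) := by nlinarith
      have h2 : ((k - 2) ^ 2 * γob - (3 * k - 2)) ^ 2 < 4 * s ^ 2 := by nlinarith
      have h3 : (k - 2) ^ 2 * ((k - 2) ^ 2 * γob ^ 2 - (6 * k - 4) * γob + 1) < 0 := by
        nlinarith [hs2]
      have h4 : (γob * (k - 2) - 3) ^ 2 < 8 * (1 + γob) := by nlinarith
      nlinarith [sq_nonneg (4 * c - (γob * (k - 2) - 3))]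
  have inner : c / ((1 + c) * γob) + (k + c) / (1 + c) ^ 2
      < 1 / γob + 1 / c + 1 / (γob * c) := by
    rw [← sub_pos]
    have hden : (0 : ℝ) < γob * c * (1 + c) ^ 2 := by positivity
    have heq : 1 / γob + 1 / c + 1 / (γob * c) -
        (c / ((1 + c) * γob) + (k + c) / (1 + c) ^ 2)
        = (2 * c ^ 2 + (3 - γob * (k - 2)) * c + (1 + γob)) / (γob * c * (1 + c) ^ 2) :=
      coded_uncoded_diff_eq γob c k (ne_of_gt hob) (ne_of_gt hc) (by positivity)
    rw [heq]
    exact div_pos key hden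
  exact mul_lt_mul_of_pos_left inner hfac
end

section
/- Under the total power constraint, for K = 1 or K = 2, D^total_Coded < D^total_Uncoded for all γ_ob, γ_total > 0; for K ≥ 3, D^total_Coded < D^total_Uncoded holds if γ_ob < (γ_total+K)(2γ_total+K)/max((K²−2K)γ_total − K², 0⁺). -/
lemma key_coded (k σθ2 γob γt : ℝ) (hk : 1 ≤ k)
    (hσ : 0 < σθ2) (hob : 0 < γob) (htot : 0 < γt)
    (h : γob * ((k^2 - 2*k)*γt - k^2) < (γt + k) * (2*γt + k)) :
    σθ2 * (γt / (k * (k + γt) * γob) + (k^2 + γt) / (k + γt)^2)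
      < σθ2 * (1 / (k * γob) + 1 / γt + 1 / (γob * γt)) := by
  have hk0 : 0 < k := lt_of_lt_of_le one_pos hk
  have hkγ : 0 < k + γt := by linarith
  have hE : (1 / (k * γob) + 1 / γt + 1 / (γob * γt))
      - (γt / (k * (k + γt) * γob) + (k^2 + γt) / (k + γt)^2)
      = ((γt + k) * (2*γt + k) - γob * ((k^2 - 2*k)*γt - k^2))
        / (γob * γt * (k + γt)^2) := by
    field_simp
    ring
  have hpos : 0 < ((γt + k) * (2*γt + k) - γob * ((k^2 - 2*k)*γt - k^2))
        / (γob * γt * (k + γt)^2) := by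
    apply div_pos (by linarith) (by positivity)
  rw [← hE] at hpos
  have := mul_lt_mul_of_pos_left (by linarith :
    γt / (k * (k + γt) * γob) + (k^2 + γt) / (k + γt)^2
      < 1 / (k * γob) + 1 / γt + 1 / (γob * γt)) hσ
  exact this

/-- Total power constraint comparison: coded beats uncoded for K = 1, 2, and for
K ≥ 3 under the low-observation-SNR condition. -/
theorem coded_beats_uncoded_total_power
    (K : ℕ) (hK : 1 ≤ K) (σθ2 γob γtotal : ℝ)
    (hσ : 0 < σθ2) (hob : 0 < γob) (htot : 0 < γtotal) :
    ((K = 1 ∨ K = 2) →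
      σθ2 * (γtotal / ((K : ℝ) * ((K : ℝ) + γtotal) * γob)
          + ((K : ℝ)^2 + γtotal) / ((K : ℝ) + γtotal)^2)
        < σθ2 * (1 / ((K : ℝ) * γob) + 1 / γtotal + 1 / (γob * γtotal)))
    ∧ (3 ≤ K →
        ((((K : ℝ)^2 - 2 * K) * γtotal - (K : ℝ)^2 ≤ 0)
          ∨ (0 < ((K : ℝ)^2 - 2 * K) * γtotal - (K : ℝ)^2
              ∧ γob * (((K : ℝ)^2 - 2 * K) * γtotal - (K : ℝ)^2)
                  < (γtotal + K) * (2 * γtotal + K))) →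
        σθ2 * (γtotal / ((K : ℝ) * ((K : ℝ) + γtotal) * γob)
            + ((K : ℝ)^2 + γtotal) / ((K : ℝ) + γtotal)^2)
          < σθ2 * (1 / ((K : ℝ) * γob) + 1 / γtotal + 1 / (γob * γtotal))) := by
  have hk1 : (1 : ℝ) ≤ (K : ℝ) := by exact_mod_cast hK
  constructor
  · rintro (rfl | rfl)
    · apply key_coded _ _ _ _ hk1 hσ hob htot
      push_cast
      nlinarith
    · apply key_coded _ _ _ _ hk1 hσ hob htot
      push_cast
      nlinarith
  · rintro hK3 (h | ⟨h1, h2⟩)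
    · apply key_coded _ _ _ _ hk1 hσ hob htot
      nlinarith [mul_nonpos_of_nonneg_of_nonpos (le_of_lt hob) h,
        mul_pos (by linarith : (0:ℝ) < γtotal + K) (by linarith : (0:ℝ) < 2*γtotal + K)]
    · exact key_coded _ _ _ _ hk1 hσ hob htot h2
end

section
/- In a heterogeneous system, if ∑_{k=1}^K (1+2γ_chk)γ_obk/((1+γ_chk+γ_obk)γ_chk) > (∑_{k=1}^K γ_obk/(1+γ_chk+γ_obk))², then the coded distortion D_Coded (given by Theorem 1) is strictly smaller than the uncoded distortion D_Uncoded = σ_θ²(∑_k 1/(1/γ_obk + 1/γ_chk + 1/(γ_obk γ_chk)))⁻¹. -/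
open BigOperators

/-- Heterogeneous condition for the coded scheme to outperform the uncoded scheme. -/
theorem coded_beats_uncoded_heterogeneous
    (K : ℕ) (hK : 1 ≤ K) (σθ2 : ℝ) (hσ : 0 < σθ2)
    (γch γob : Fin K → ℝ)
    (hch : ∀ k, 0 < γch k) (hob : ∀ k, 0 < γob k)
    (u lam : Fin K → ℝ)
    (hu : ∀ k, u k = 1 / (1 + γch k))
    (hlam : ∀ k, lam k = (1 + γch k + γob k) * γch k / ((1 + γch k)^2 * γob k))
    (hcond : ∑ k, (1 + 2 * γch k) * γob k / ((1 + γch k + γob k) * γch k)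
        > (∑ k, γob k / (1 + γch k + γob k))^2) :
    σθ2 * (∑ k, 1 / lam k
        - (∑ k, u k / lam k)^2 / (1 + ∑ k, (u k)^2 / lam k))⁻¹
      < σθ2 * (∑ k, 1 / (1 / γob k + 1 / γch k + 1 / (γob k * γch k)))⁻¹ := by
  haveI : Nonempty (Fin K) := ⟨⟨0, hK⟩⟩
  set a : Fin K → ℝ := fun k => γob k / ((1 + γch k + γob k) * γch k) with ha
  have hden : ∀ k, (0:ℝ) < (1 + γch k + γob k) * γch k := by
    intro k; have := hch k; have := hob k; positivity
  have hapos : ∀ k, 0 < a k := fun k => div_pos (hob k) (hden k)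
  have h1 : ∀ k, 1 / lam k = (1 + γch k)^2 * a k := by
    intro k
    have hc := hch k; have ho := hob k
    rw [hlam, ha]
    field_simp
  have h2 : ∀ k, u k / lam k = (1 + γch k) * a k := by
    intro k
    have hc := hch k; have ho := hob k
    rw [hlam, hu, ha]
    field_simp
  have h3 : ∀ k, (u k)^2 / lam k = a k := by
    intro k
    have hc := hch k; have ho := hob k
    rw [hlam, hu, ha]
    field_simp
  have h4 : ∀ k, 1 / (1 / γob k + 1 / γch k + 1 / (γob k * γch k))
      = a k * (γch k)^2 := by
    intro k
    have hc := hch k; have ho := hob k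
    rw [ha]
    field_simp
    ring
  have h5 : ∀ k, (1 + 2 * γch k) * γob k / ((1 + γch k + γob k) * γch k)
      = a k * (1 + 2 * γch k) := by
    intro k
    have hc := hch k; have ho := hob k
    rw [ha]
    field_simp
  have h6 : ∀ k, γob k / (1 + γch k + γob k) = a k * γch k := by
    intro k
    have hc := hch k; have ho := hob k
    rw [ha]
    field_simp
  set P : ℝ := ∑ k, a k with hP
  set Q : ℝ := ∑ k, a k * γch k with hQ
  set R : ℝ := ∑ k, a k * (γch k)^2 with hR
  have hPpos : 0 < P := Finset.sum_pos (fun k _ => hapos k) Finset.univ_nonempty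
  have hQpos : 0 < Q := Finset.sum_pos
    (fun k _ => mul_pos (hapos k) (hch k)) Finset.univ_nonempty
  have hRpos : 0 < R := Finset.sum_pos
    (fun k _ => mul_pos (hapos k) (pow_pos (hch k) 2)) Finset.univ_nonempty
  have hcond' : Q^2 < P + 2*Q := by
    have e1 : ∑ k, (1 + 2 * γch k) * γob k / ((1 + γch k + γob k) * γch k)
        = P + 2*Q := by
      rw [Finset.sum_congr rfl fun k _ => h5 k, hP, hQ]
      rw [Finset.mul_sum, ← Finset.sum_add_distrib]
      apply Finset.sum_congr rfl
      intro k _; ring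
    have e2 : ∑ k, γob k / (1 + γch k + γob k) = Q := by
      rw [Finset.sum_congr rfl fun k _ => h6 k, hQ]
    rw [e1, e2] at hcond
    linarith
  have eA : ∑ k, 1 / lam k = P + 2*Q + R := by
    rw [Finset.sum_congr rfl fun k _ => h1 k, hP, hQ, hR]
    rw [Finset.mul_sum, ← Finset.sum_add_distrib, ← Finset.sum_add_distrib]
    apply Finset.sum_congr rfl
    intro k _; ring
  have eB : ∑ k, u k / lam k = P + Q := by
    rw [Finset.sum_congr rfl fun k _ => h2 k, hP, hQ, ← Finset.sum_add_distrib]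
    apply Finset.sum_congr rfl
    intro k _; ring
  have eC : ∑ k, (u k)^2 / lam k = P := by
    rw [Finset.sum_congr rfl fun k _ => h3 k, hP]
  have eD : ∑ k, 1 / (1 / γob k + 1 / γch k + 1 / (γob k * γch k)) = R := by
    rw [Finset.sum_congr rfl fun k _ => h4 k, hR]
  rw [eA, eB, eC, eD]
  have h1P : (0:ℝ) < 1 + P := by linarith
  have key : R < P + 2*Q + R - (P + Q)^2 / (1 + P) := by
    have : (P + Q)^2 / (1 + P) < P + 2*Q := by
      rw [div_lt_iff₀ h1P]
      nlinarith
    linarith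
  exact mul_lt_mul_of_pos_left
    (inv_strictAnti₀ hRpos key) hσ
end
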